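/- arXiv:2505.22363 — 3 statements merged into one kernel-verified Lean document; each statement's English description precedes it below -/
import Mathlib

section
/- Let T : D → D be a θ-averaged operator on a nonempty closed convex subset D of a Hilbert space, with 0 < θ < 1 and Fix T ≠ ∅. Then the Picard iteration x_{n+1} = T x_n converges weakly to a fixed point of T. -/
open Filter Topology in

/-- Weak sequential compactness of bounded sequences in a real Hilbert space. -/
lemma weakBW {H : Type*} [NormedAddCommGroup H] [InnerProductSpace ℝ H] [CompleteSpace H]
    (u : ℕ → H) (C : ℝ) (hC : ∀ n, ‖u n‖ ≤ C) :
    ∃ z : H, ∃ φ : ℕ → ℕ, StrictMono φ ∧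
      ∀ y : H, Tendsto (fun k => (inner ℝ (u (φ k)) y : ℝ)) atTop (𝓝 (inner ℝ z y : ℝ)) := by
  have hC0 : 0 ≤ C := le_trans (norm_nonneg _) (hC 0)
  set M : Submodule ℝ H := (Submodule.span ℝ (Set.range u)).topologicalClosure with hM
  haveI : CompleteSpace M :=
    (Submodule.isClosed_topologicalClosure _).completeSpace_coe
  have huM : ∀ n, u n ∈ M :=
    fun n => Submodule.le_topologicalClosure _ (Submodule.subset_span (Set.mem_range_self n))
  -- countable dense subset of M
  have hsep : TopologicalSpace.IsSeparable (M : Set H) :=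
    ((Set.countable_range u).isSeparable.span).closure
  obtain ⟨c, hc_count, hc_sub⟩ := hsep
  obtain ⟨e, he⟩ : ∃ e : ℕ → H, insert (0 : H) c = Set.range e :=
    (hc_count.insert 0).exists_eq_range (Set.insert_nonempty _ _)
  have hMe : (M : Set H) ⊆ closure (Set.range e) := by
    refine hc_sub.trans (closure_mono ?_)
    rw [← he]; exact Set.subset_insert _ _
  -- diagonal extraction via seq compactness of a product of intervals
  set v : ℕ → ℕ → ℝ := fun n j => (inner ℝ (u n) (e j) : ℝ) with hv
  have hvK : ∀ n, v n ∈ Set.univ.pi fun j => Set.Icc (-(C * ‖e j‖)) (C * ‖e j‖) := by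
    intro n j _
    have h := abs_real_inner_le_norm (u n) (e j)
    have h2 : |v n j| ≤ C * ‖e j‖ :=
      h.trans (mul_le_mul_of_nonneg_right (hC n) (norm_nonneg _))
    exact abs_le.mp h2
  obtain ⟨L, -, φ, hφ, hφL⟩ :=
    (isCompact_univ_pi fun j => isCompact_Icc).isSeqCompact hvK
  have hptw : ∀ j, Tendsto (fun k => v (φ k) j) atTop (𝓝 (L j)) :=
    fun j => (tendsto_pi_nhds.mp hφL) j
  -- every inner-product sequence along φ is Cauchy
  have key : ∀ y : H, CauchySeq (fun k => (inner ℝ (u (φ k)) y : ℝ)) := by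
    intro y
    obtain ⟨m, hm, w, hw, rfl⟩ := M.exists_add_mem_mem_orthogonal y
    have hw0 : ∀ n, (inner ℝ (u n) w : ℝ) = 0 := fun n =>
      real_inner_comm (u n) w ▸ ((Submodule.mem_orthogonal M w).mp hw (u n) (huM n))
    have heq : ∀ k, (inner ℝ (u (φ k)) (m + w) : ℝ) = inner ℝ (u (φ k)) m := by
      intro k; rw [inner_add_right, hw0, add_zero]
    simp only [heq]
    rw [Metric.cauchySeq_iff]
    intro ε hε
    have hpos : 0 < ε / (4 * (C + 1)) := by positivity
    obtain ⟨b, hb, hbd⟩ := Metric.mem_closure_iff.mp (hMe hm) _ hpos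
    obtain ⟨j, rfl⟩ := hb
    obtain ⟨Nn, hNn⟩ := Metric.cauchySeq_iff.mp (hptw j).cauchySeq (ε / 2) (by positivity)
    refine ⟨Nn, fun k hk l hl => ?_⟩
    have hgen : ∀ a : ℕ, |(inner ℝ (u a) m : ℝ) - inner ℝ (u a) (e j)| ≤ C * (ε / (4 * (C + 1))) := by
      intro a
      have : (inner ℝ (u a) m : ℝ) - inner ℝ (u a) (e j) = inner ℝ (u a) (m - e j) := by
        rw [inner_sub_right]
      rw [this]
      refine (abs_real_inner_le_norm _ _).trans ?_
      have hd : ‖m - e j‖ ≤ ε / (4 * (C + 1)) := by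
        rw [← dist_eq_norm]; exact le_of_lt hbd
      exact mul_le_mul (hC a) hd (norm_nonneg _) hC0
    have h1 := hgen (φ k)
    have h2 := hgen (φ l)
    have h3 := hNn k hk l hl
    rw [Real.dist_eq] at h3 ⊢
    have hvkl : v (φ k) j = inner ℝ (u (φ k)) (e j) := rfl
    have hCe : C * (ε / (4 * (C + 1))) < ε / 4 := by
      have heq2 : C * (ε / (4 * (C + 1))) = (C * ε) / (4 * (C + 1)) := by ring
      rw [heq2, div_lt_div_iff₀ (by positivity) (by norm_num)]
      nlinarith
    have hvlj : v (φ l) j = inner ℝ (u (φ l)) (e j) := rfl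
    rw [hvkl, hvlj] at h3
    have tri1 : |(inner ℝ (u (φ k)) m : ℝ) - inner ℝ (u (φ l)) m| ≤
        |(inner ℝ (u (φ k)) m : ℝ) - inner ℝ (u (φ k)) (e j)| +
          |(inner ℝ (u (φ k)) (e j) : ℝ) - inner ℝ (u (φ l)) m| := abs_sub_le _ _ _
    have tri2 : |(inner ℝ (u (φ k)) (e j) : ℝ) - inner ℝ (u (φ l)) m| ≤
        |(inner ℝ (u (φ k)) (e j) : ℝ) - inner ℝ (u (φ l)) (e j)| +
          |(inner ℝ (u (φ l)) (e j) : ℝ) - inner ℝ (u (φ l)) m| := abs_sub_le _ _ _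
    have h2' : |(inner ℝ (u (φ l)) (e j) : ℝ) - inner ℝ (u (φ l)) m| ≤ C * (ε / (4 * (C + 1))) := by
      rw [abs_sub_comm]; exact h2
    linarith
  -- construct the weak limit via Riesz representation
  have hconv : ∀ y : H, ∃ l : ℝ, Tendsto (fun k => (inner ℝ (u (φ k)) y : ℝ)) atTop (𝓝 l) :=
    fun y => cauchySeq_tendsto_of_complete (key y)
  choose g hg using hconv
  have hmap_add : ∀ y y', g (y + y') = g y + g y' := by
    intro y y'
    refine tendsto_nhds_unique ?_ ((hg y).add (hg y'))
    have : (fun k => (inner ℝ (u (φ k)) (y + y') : ℝ)) =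
        fun k => (inner ℝ (u (φ k)) y : ℝ) + inner ℝ (u (φ k)) y' := by
      funext k; rw [inner_add_right]
    rw [← this]; exact hg (y + y')
  have hmap_smul : ∀ (a : ℝ) y, g (a • y) = a * g y := by
    intro a y
    refine tendsto_nhds_unique ?_ ((hg y).const_mul a)
    have : (fun k => (inner ℝ (u (φ k)) (a • y) : ℝ)) =
        fun k => a * (inner ℝ (u (φ k)) y : ℝ) := by
      funext k; rw [real_inner_smul_right]
    rw [← this]; exact hg (a • y)
  have hbound : ∀ y, |g y| ≤ C * ‖y‖ := by
    intro y
    have h1 : ∀ k, |(inner ℝ (u (φ k)) y : ℝ)| ≤ C * ‖y‖ := fun k =>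
      (abs_real_inner_le_norm _ _).trans
        (mul_le_mul_of_nonneg_right (hC _) (norm_nonneg _))
    have h2 : Tendsto (fun k => |(inner ℝ (u (φ k)) y : ℝ)|) atTop (𝓝 |g y|) := (hg y).abs
    exact le_of_tendsto h2 (Eventually.of_forall h1)
  let flin : H →ₗ[ℝ] ℝ :=
    { toFun := g, map_add' := hmap_add, map_smul' := hmap_smul }
  let f : H →L[ℝ] ℝ := flin.mkContinuous C fun y => by
    rw [Real.norm_eq_abs]; exact hbound y
  refine ⟨(InnerProductSpace.toDual ℝ H).symm f, φ, hφ, fun y => ?_⟩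
  have hz : (inner ℝ ((InnerProductSpace.toDual ℝ H).symm f) y : ℝ) = f y :=
    InnerProductSpace.toDual_symm_apply
  rw [hz]
  exact hg y

open Filter Topology in

set_option maxHeartbeats 2000000 in
/-- Krasnosel'skiĭ–Mann: if `T` is a `θ`-averaged self-map of a nonempty closed convex
subset `D` of a Hilbert space (`0 < θ < 1`) with a fixed point, then the Picard iteration
converges weakly to a fixed point of `T`. -/
theorem stmt5 {H : Type*} [NormedAddCommGroup H] [InnerProductSpace ℝ H] [CompleteSpace H]
    (D : Set H) (hDne : D.Nonempty) (hDcl : IsClosed D) (hDcv : Convex ℝ D)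
    (θ : ℝ) (hθ0 : 0 < θ) (hθ1 : θ < 1)
    (T N : H → H)
    (hTD : Set.MapsTo T D D)
    (hNnonexp : ∀ x ∈ D, ∀ y ∈ D, ‖N x - N y‖ ≤ ‖x - y‖)
    (havg : ∀ x ∈ D, T x = (1 - θ) • x + θ • N x)
    (hfix : ∃ x ∈ D, T x = x) :
    ∀ x0 ∈ D, ∃ xs ∈ D, T xs = xs ∧
      ∀ y : H, Filter.Tendsto (fun n => (inner ℝ (T^[n] x0) y : ℝ)) Filter.atTop
        (nhds (inner ℝ xs y : ℝ)) := by
  obtain ⟨p, hpD, hpT⟩ := hfix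
  intro x0 hx0
  set x : ℕ → H := fun n => T^[n] x0 with hxdef
  have hxD : ∀ n, x n ∈ D := by
    intro n
    induction n with
    | zero => simpa [hxdef]
    | succ n ih =>
        have : x (n + 1) = T (x n) := Function.iterate_succ_apply' T n x0
        rw [this]; exact hTD ih
  have hxsucc : ∀ n, x (n + 1) = T (x n) := fun n => Function.iterate_succ_apply' T n x0
  -- nonexpansiveness of T on D
  have hTnon : ∀ a ∈ D, ∀ b ∈ D, ‖T a - T b‖ ≤ ‖a - b‖ := by
    intro a ha b hb
    have h1 : T a - T b = (1 - θ) • (a - b) + θ • (N a - N b) := by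
      rw [havg a ha, havg b hb]; module
    rw [h1]
    calc ‖(1 - θ) • (a - b) + θ • (N a - N b)‖
        ≤ ‖(1 - θ) • (a - b)‖ + ‖θ • (N a - N b)‖ := norm_add_le _ _
      _ = (1 - θ) * ‖a - b‖ + θ * ‖N a - N b‖ := by
          rw [norm_smul, norm_smul, Real.norm_eq_abs, Real.norm_eq_abs,
            abs_of_nonneg (by linarith), abs_of_nonneg (by linarith)]
      _ ≤ (1 - θ) * ‖a - b‖ + θ * ‖a - b‖ := by
          have := hNnonexp a ha b hb
          nlinarith
      _ = ‖a - b‖ := by ring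
  -- fixed points of T are fixed points of N
  have hNfix : ∀ q ∈ D, T q = q → N q = q := by
    intro q hq hTq
    have h1 := havg q hq
    rw [hTq] at h1
    have h2 : θ • (N q - q) = 0 := by
      have : q - ((1 - θ) • q + θ • N q) = 0 := by rw [← h1]; abel
      rw [← neg_eq_zero, ← this]; module
    have h3 : N q - q = 0 := by
      rcases smul_eq_zero.mp h2 with h | h
      · exact absurd h (ne_of_gt hθ0)
      · exact h
    have := sub_eq_zero.mp h3
    exact this
  -- key inequality
  have hkey : ∀ a ∈ D, ∀ q ∈ D, T q = q →
      ‖T a - q‖ ^ 2 + (1 - θ) / θ * ‖T a - a‖ ^ 2 ≤ ‖a - q‖ ^ 2 := by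
    intro a ha q hq hTq
    have hNq := hNfix q hq hTq
    have e1 : T a - q = (1 - θ) • (a - q) + θ • (N a - q) := by
      rw [havg a ha]; module
    have e2 : T a - a = θ • ((N a - q) - (a - q)) := by
      rw [havg a ha]; module
    have hb : ‖N a - q‖ ≤ ‖a - q‖ := by
      have := hNnonexp a ha q hq; rwa [hNq] at this
    set A := a - q
    set B := N a - q
    have n1 : ‖T a - q‖ ^ 2 = (1 - θ) ^ 2 * ‖A‖ ^ 2 + 2 * ((1 - θ) * θ * inner ℝ A B) +
        θ ^ 2 * ‖B‖ ^ 2 := by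
      rw [e1, norm_add_sq_real, norm_smul, norm_smul, real_inner_smul_left,
        real_inner_smul_right, Real.norm_eq_abs, Real.norm_eq_abs,
        abs_of_nonneg (by linarith : (0:ℝ) ≤ 1 - θ), abs_of_nonneg hθ0.le]
      ring
    have n2 : ‖T a - a‖ ^ 2 = θ ^ 2 * (‖B‖ ^ 2 - 2 * inner ℝ B A + ‖A‖ ^ 2) := by
      rw [e2, norm_smul, Real.norm_eq_abs, abs_of_nonneg hθ0.le, mul_pow, ← norm_sub_sq_real]
    have hsym : (inner ℝ B A : ℝ) = inner ℝ A B := real_inner_comm A B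
    have hBA : ‖B‖ ^ 2 ≤ ‖A‖ ^ 2 := by nlinarith [norm_nonneg B, norm_nonneg A]
    have hdiv : (1 - θ) / θ * θ ^ 2 = θ * (1 - θ) := by field_simp
    have hdiv2 : (1 - θ) / θ * (θ ^ 2 * (‖B‖ ^ 2 - 2 * inner ℝ A B + ‖A‖ ^ 2)) =
        θ * (1 - θ) * (‖B‖ ^ 2 - 2 * inner ℝ A B + ‖A‖ ^ 2) := by
      field_simp
    rw [n1, n2, hsym, hdiv2]
    nlinarith [hBA, hθ0, hθ1]
  -- Fejér monotonicity
  have hmonog : ∀ q ∈ D, T q = q → ∀ n,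
      ‖x (n+1) - q‖^2 + (1 - θ)/θ * ‖x (n+1) - x n‖^2 ≤ ‖x n - q‖^2 := by
    intro q hq hTq n
    have h := hkey (x n) (hxD n) q hq hTq
    rwa [← hxsucc n] at h
  have hantig : ∀ q ∈ D, T q = q → Antitone fun n => ‖x n - q‖^2 := by
    intro q hq hTq
    refine antitone_nat_of_succ_le fun n => ?_
    have h := hmonog q hq hTq n
    have hpos : 0 ≤ (1 - θ)/θ * ‖x (n+1) - x n‖^2 :=
      mul_nonneg (div_nonneg (by linarith) hθ0.le) (sq_nonneg _)
    linarith
  have hlimg : ∀ q ∈ D, T q = q → ∃ c, Tendsto (fun n => ‖x n - q‖^2) atTop (𝓝 c) := by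
    intro q hq hTq
    refine ⟨_, tendsto_atTop_ciInf (hantig q hq hTq) ⟨0, ?_⟩⟩
    rintro r ⟨n, rfl⟩; positivity
  -- asymptotic regularity
  obtain ⟨cp, hcp⟩ := hlimg p hpD hpT
  have hdiff : Tendsto (fun n => ‖x n - p‖^2 - ‖x (n+1) - p‖^2) atTop (𝓝 0) := by
    have h2 : Tendsto (fun n => ‖x (n+1) - p‖^2) atTop (𝓝 cp) :=
      hcp.comp (tendsto_add_atTop_nat 1)
    simpa using hcp.sub h2
  have hsq : Tendsto (fun n => ‖x (n+1) - x n‖^2) atTop (𝓝 0) := by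
    refine squeeze_zero (fun n => by positivity)
      (g := fun n => θ/(1-θ) * (‖x n - p‖^2 - ‖x (n+1) - p‖^2)) (fun n => ?_) ?_
    · have h := hmonog p hpD hpT n
      have hθne : θ ≠ 0 := ne_of_gt hθ0
      have h1θne : (1:ℝ) - θ ≠ 0 := ne_of_gt (by linarith)
      have hkey2 : ‖x (n+1) - x n‖^2 = θ/(1-θ) * ((1-θ)/θ * ‖x (n+1) - x n‖^2) := by
        field_simp
      rw [hkey2]
      exact mul_le_mul_of_nonneg_left (by linarith) (div_nonneg hθ0.le (by linarith))
    · simpa using hdiff.const_mul (θ/(1-θ))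
  have hreg : Tendsto (fun n => ‖T (x n) - x n‖) atTop (𝓝 0) := by
    have h1 : Tendsto (fun n => Real.sqrt (‖x (n+1) - x n‖^2)) atTop (𝓝 (Real.sqrt 0)) :=
      hsq.sqrt
    rw [Real.sqrt_zero] at h1
    have h2 : (fun n => Real.sqrt (‖x (n+1) - x n‖^2)) = fun n => ‖T (x n) - x n‖ := by
      funext n; rw [Real.sqrt_sq (norm_nonneg _), hxsucc n]
    rwa [h2] at h1
  -- boundedness
  set C := ‖x0 - p‖ + ‖p‖ with hCdef
  have hCb : ∀ n, ‖x n‖ ≤ C := by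
    intro n
    have h1 : ‖x n - p‖^2 ≤ ‖x 0 - p‖^2 := hantig p hpD hpT (Nat.zero_le n)
    have h2 : ‖x n - p‖ ≤ ‖x 0 - p‖ := by
      nlinarith [norm_nonneg (x n - p), norm_nonneg (x 0 - p)]
    have h3 : x 0 = x0 := rfl
    rw [h3] at h2
    calc ‖x n‖ = ‖(x n - p) + p‖ := by rw [sub_add_cancel]
      _ ≤ ‖x n - p‖ + ‖p‖ := norm_add_le _ _
      _ ≤ C := by rw [hCdef]; linarith
  -- demiclosedness
  have hdemi : ∀ (w : ℕ → H) (z : H), (∀ k, w k ∈ D) → (∀ k, ‖w k‖ ≤ C) →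
      (∀ y, Tendsto (fun k => (inner ℝ (w k) y : ℝ)) atTop (𝓝 (inner ℝ z y : ℝ))) →
      Tendsto (fun k => ‖T (w k) - w k‖) atTop (𝓝 0) →
      z ∈ D ∧ T z = z := by
    intro w z hwD hwB hwk hwr
    have hzD : z ∈ D := by
      by_contra hzn
      obtain ⟨f, r, hfs, hfz⟩ := geometric_hahn_banach_closed_point hDcv hDcl hzn
      set v := (InnerProductSpace.toDual ℝ H).symm f with hv
      have hfv : ∀ a : H, f a = (inner ℝ v a : ℝ) := fun a =>
        (InnerProductSpace.toDual_symm_apply).symm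
      have h1 : Tendsto (fun k => f (w k)) atTop (𝓝 (f z)) := by
        have h2 := hwk v
        have h3 : (fun k => f (w k)) = fun k => (inner ℝ (w k) v : ℝ) := by
          funext k; rw [hfv, real_inner_comm]
        rw [h3, hfv, real_inner_comm]
        exact h2
      have := le_of_tendsto h1 (Eventually.of_forall fun k => (hfs (w k) (hwD k)).le)
      linarith
    have hB : ∀ k, ‖w k - z‖ ≤ C + ‖z‖ := fun k =>
      (norm_sub_le _ _).trans (by linarith [hwB k])
    have hinner0 : Tendsto (fun k => (inner ℝ (w k - z) (z - T z) : ℝ)) atTop (𝓝 0) := by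
      have h1 := hwk (z - T z)
      have h2 : (fun k => (inner ℝ (w k - z) (z - T z) : ℝ))
          = fun k => (inner ℝ (w k) (z - T z) : ℝ) - (inner ℝ z (z - T z) : ℝ) := by
        funext k; rw [inner_sub_left]
      rw [h2]
      simpa using h1.sub (tendsto_const_nhds (x := (inner ℝ z (z - T z) : ℝ)))
    have hmain : ∀ k, 2 * (inner ℝ (w k - z) (z - T z) : ℝ) + ‖z - T z‖^2 ≤
        ‖T (w k) - w k‖^2 + 2 * ‖T (w k) - w k‖ * (C + ‖z‖) := by
      intro k
      have hexp : ‖w k - T z‖^2 =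
          ‖w k - z‖^2 + 2 * (inner ℝ (w k - z) (z - T z) : ℝ) + ‖z - T z‖^2 := by
        have h4 : w k - T z = (w k - z) + (z - T z) := by abel
        rw [h4, norm_add_sq_real]
      have htri : ‖w k - T z‖ ≤ ‖T (w k) - w k‖ + ‖w k - z‖ := by
        have h5 : ‖w k - T z‖ ≤ ‖w k - T (w k)‖ + ‖T (w k) - T z‖ := by
          have := dist_triangle (w k) (T (w k)) (T z)
          simpa [dist_eq_norm] using this
        have h6 : ‖T (w k) - T z‖ ≤ ‖w k - z‖ := hTnon (w k) (hwD k) z hzD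
        have h7 : ‖w k - T (w k)‖ = ‖T (w k) - w k‖ := norm_sub_rev _ _
        linarith
      have hsq2 : ‖w k - T z‖^2 ≤ (‖T (w k) - w k‖ + ‖w k - z‖)^2 := by
        nlinarith [norm_nonneg (w k - T z)]
      nlinarith [hB k, norm_nonneg (T (w k) - w k), norm_nonneg (w k - z),
        mul_le_mul_of_nonneg_left (hB k) (norm_nonneg (T (w k) - w k))]
    have hlhs : Tendsto (fun k => 2 * (inner ℝ (w k - z) (z - T z) : ℝ) + ‖z - T z‖^2)
        atTop (𝓝 (‖z - T z‖^2)) := by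
      simpa using (hinner0.const_mul 2).add
        (tendsto_const_nhds (x := ‖z - T z‖^2))
    have hrhs : Tendsto (fun k => ‖T (w k) - w k‖^2 + 2 * ‖T (w k) - w k‖ * (C + ‖z‖))
        atTop (𝓝 0) := by
      have h8 : Tendsto (fun k => ‖T (w k) - w k‖^2) atTop (𝓝 0) := by
        have := hwr.mul hwr
        simpa [sq] using this
      have h9 : Tendsto (fun k => 2 * ‖T (w k) - w k‖ * (C + ‖z‖)) atTop (𝓝 0) := by
        have := (hwr.const_mul 2).mul_const (C + ‖z‖)
        simpa [mul_assoc] using this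
      simpa using h8.add h9
    have hfin : ‖z - T z‖^2 ≤ 0 := le_of_tendsto_of_tendsto' hlhs hrhs hmain
    have h10 : ‖z - T z‖ = 0 := by nlinarith [norm_nonneg (z - T z)]
    exact ⟨hzD, (sub_eq_zero.mp (norm_eq_zero.mp h10)).symm⟩
  -- extract weak limit and conclude
  obtain ⟨z, φ, hφ, hφw⟩ := weakBW x C hCb
  obtain ⟨hzD, hzT⟩ := hdemi (fun k => x (φ k)) z (fun k => hxD _) (fun k => hCb _)
    hφw (hreg.comp hφ.tendsto_atTop)
  refine ⟨z, hzD, hzT, fun y => ?_⟩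
  apply tendsto_of_subseq_tendsto
  intro ns hns
  obtain ⟨z', ψ, hψ, hψw⟩ := weakBW (fun n => x (ns n)) C (fun n => hCb _)
  have hcomp : Tendsto (fun k => ns (ψ k)) atTop atTop := hns.comp hψ.tendsto_atTop
  obtain ⟨hz'D, hz'T⟩ := hdemi (fun k => x (ns (ψ k))) z' (fun k => hxD _) (fun k => hCb _)
    hψw (hreg.comp hcomp)
  obtain ⟨cz, hcz⟩ := hlimg z hzD hzT
  obtain ⟨cz', hcz'⟩ := hlimg z' hz'D hz'T
  have hident : ∀ n, (inner ℝ (x n) (z - z') : ℝ) =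
      (‖x n - z'‖^2 - ‖x n - z‖^2 - ‖z'‖^2 + ‖z‖^2)/2 := by
    intro n
    have h1 := norm_sub_sq_real (x n) z
    have h2 := norm_sub_sq_real (x n) z'
    have h3 : (inner ℝ (x n) (z - z') : ℝ) = (inner ℝ (x n) z : ℝ) - (inner ℝ (x n) z' : ℝ) :=
      inner_sub_right _ _ _
    linarith
  have hcfull : Tendsto (fun n => (inner ℝ (x n) (z - z') : ℝ)) atTop
      (𝓝 ((cz' - cz - ‖z'‖^2 + ‖z‖^2)/2)) := by
    simp only [hident]
    exact (((hcz'.sub hcz).sub_const _).add_const _).div_const 2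
  have h1 : (inner ℝ z (z - z') : ℝ) = (cz' - cz - ‖z'‖^2 + ‖z‖^2)/2 :=
    tendsto_nhds_unique (hφw (z - z')) (hcfull.comp hφ.tendsto_atTop)
  have h2 : (inner ℝ z' (z - z') : ℝ) = (cz' - cz - ‖z'‖^2 + ‖z‖^2)/2 :=
    tendsto_nhds_unique (hψw (z - z')) (hcfull.comp hcomp)
  have hzz : z = z' := by
    have h3 : (inner ℝ (z - z') (z - z') : ℝ) = 0 := by
      rw [inner_sub_left, h1, h2]; ring
    exact sub_eq_zero.mp (inner_self_eq_zero.mp h3)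
  exact ⟨ψ, by rw [hzz]; exact hψw y⟩
end

section
/- Let A, B, C be operators on a Hilbert space H and α > 0. Define the operator T = Id − J_{αB} + J_{αA} ∘ (2 J_{αB} − Id + αC ∘ J_{αB}), where J denotes the resolvent. Then a point z is a fixed point of T if and only if x = J_{αB}(z) satisfies 0 ∈ (A + B − C)(x), assuming the resolvents are single-valued on the relevant domain. -/
/-- For operators `A, B, C` on a Hilbert space with single-valued resolvents `JA = J_{αA}`,
`JB = J_{αB}` and `α > 0`, a point `z` is a fixed point of
`T = Id − J_{αB} + J_{αA}∘(2J_{αB} − Id + αC∘J_{αB})` if and only if `x = J_{αB}(z)`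
satisfies `(A + B − C)(x) = 0`. -/
theorem stmt7 {H : Type*} [NormedAddCommGroup H] [InnerProductSpace ℝ H]
    (A B C : H → H) (α : ℝ) (hα : 0 < α)
    (JA JB : H → H)
    (hJA : ∀ z, JA z + α • A (JA z) = z)
    (hJAuniq : ∀ z y, y + α • A y = z → y = JA z)
    (hJB : ∀ z, JB z + α • B (JB z) = z)
    (hJBuniq : ∀ z y, y + α • B y = z → y = JB z)
    (T : H → H)
    (hT : ∀ z, T z = z - JB z + JA ((2 : ℝ) • JB z - z + α • C (JB z))) :
    ∀ z : H, T z = z ↔ A (JB z) + B (JB z) - C (JB z) = 0 := by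
  intro z
  set x := JB z with hx
  have hxz : x + α • B x = z := hJB z
  set w := (2 : ℝ) • x - z + α • C x with hw
  have hfix : T z = z ↔ JA w = x := by
    rw [hT z]
    constructor
    · intro h
      have : JA w = x := by
        have := h
        rw [← hx, ← hw] at this
        linear_combination (norm := abel_nf) this
      exact this
    · intro h; rw [h]; abel
  rw [hfix]
  constructor
  · intro h
    have h2 : x + α • A x = w := by rw [← h]; exact hJA w
    have : α • (A x + B x - C x) = 0 := by
      have := h2
      rw [hw, two_smul] at this
      have hz := hxz
      simp only [smul_add, smul_sub]
      linear_combination (norm := abel_nf) this + hz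
    have := smul_eq_zero.mp this
    rcases this with h' | h'
    · exact absurd h' (ne_of_gt hα)
    · exact h'
  · intro h
    have h2 : x + α • A x = w := by
      rw [hw, two_smul]
      have : α • A x = α • C x - α • B x := by
        have : α • (A x + B x - C x) = α • (0 : H) := by rw [h]
        simp only [smul_add, smul_sub, smul_zero] at this
        linear_combination (norm := abel_nf) this
      rw [this, ← hxz]; abel
    exact (hJAuniq w x h2).symm
end

section
/- Let A : H → H be maximally monotone and let 𝐀 : H^M → H^M be the diagonal lifting 𝐀(x₁,...,x_M) = (A x₁, ..., A x_M). Let N_C be the normal cone of the consensus subspace C ⊆ H^M. Then the resolvent of 𝐀 + N_C satisfies J_{𝐀 + N_C}(x) = J_𝐀(P_C(x)), i.e., it equals the componentwise resolvent of A applied to the average (1/M)Σᵢ xᵢ, replicated M times. -/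
/-- Resolvent of a diagonal lifting plus the normal cone of the consensus subspace:
if `A` is (maximally) monotone with single-valued, everywhere-defined resolvent
`JA = (Id + A)⁻¹`, then `y = J_{𝐀 + N_C}(x)` — i.e. `x − y − 𝐀y ∈ N_C(y)`, which means
`y` is in the consensus subspace and `Σᵢ (xᵢ − yᵢ − A yᵢ) = 0` — holds if and only if
`y = (JA(x̄),...,JA(x̄))` with `x̄ = (1/M)Σᵢ xᵢ`. -/
theorem stmt16 {H : Type*} [NormedAddCommGroup H] [InnerProductSpace ℝ H]
    (M : ℕ) (hM : 1 ≤ M)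
    (A : H → H)
    (hmono : ∀ x y, (0 : ℝ) ≤ inner ℝ (A x - A y) (x - y))
    (JA : H → H)
    (hJA : ∀ z, JA z + A (JA z) = z)
    (hJAuniq : ∀ z y, y + A y = z → y = JA z) :
    ∀ x y : Fin M → H,
      ((∃ z : H, ∀ i, y i = z) ∧ ∑ i, (x i - y i - A (y i)) = 0) ↔
      (∀ i, y i = JA ((M : ℝ)⁻¹ • ∑ j, x j)) := by
  intro x y
  have hM0 : (M : ℝ) ≠ 0 := by positivity
  constructor
  · rintro ⟨⟨z, hz⟩, hsum⟩ i
    rw [hz i]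
    apply hJAuniq
    have : ∑ i, (x i - y i - A (y i)) = (∑ j, x j) - (M : ℝ) • (z + A z) := by
      rw [Finset.sum_sub_distrib, Finset.sum_sub_distrib]
      simp [hz, smul_add, Nat.cast_smul_eq_nsmul ℝ]
      abel
    rw [this, sub_eq_zero] at hsum
    rw [eq_comm, hsum, smul_smul, inv_mul_cancel₀ hM0, one_smul]
  · intro h
    refine ⟨⟨JA ((M : ℝ)⁻¹ • ∑ j, x j), h⟩, ?_⟩
    have : ∑ i, (x i - y i - A (y i)) =
        (∑ j, x j) - (M : ℝ) • (JA ((M : ℝ)⁻¹ • ∑ j, x j) +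
          A (JA ((M : ℝ)⁻¹ • ∑ j, x j))) := by
      rw [Finset.sum_sub_distrib, Finset.sum_sub_distrib]
      simp [h, smul_add, Nat.cast_smul_eq_nsmul ℝ]
      abel
    rw [this, hJA, smul_smul, mul_inv_cancel₀ hM0, one_smul, sub_self]
end
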